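/- Let a be a bounded automorphism of the regular rooted d-ary tree T. Then a and a⁻¹ are conjugate in the group F(X) of finite-state automorphisms. -/

import Mathlib

open List

/-- Vertices of the rooted `d`-ary tree `T`: finite words over the alphabet
`X = Fin d`. -/
abbrev Vertex (d : ℕ) := List (Fin d)

/-- `g` is an automorphism of the rooted `d`-ary tree: a bijection of the
vertex set `X*` preserving word length and the prefix relation. -/
def IsTreeAut {d : ℕ} (g : Equiv.Perm (Vertex d)) : Prop :=
  (∀ v : Vertex d, (g v).length = v.length) ∧
    ∀ v w : Vertex d, g v <+: g (v ++ w)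

theorem IsTreeAut.prefix_mono {d : ℕ} {g : Equiv.Perm (Vertex d)} (hg : IsTreeAut g)
    {u u' : Vertex d} (h : u <+: u') : g u <+: g u' := by
  obtain ⟨t, rfl⟩ := h
  exact hg.2 u t

/-- The automorphism group `Aut(T)` of the rooted `d`-ary tree, as a subgroup
of the group of permutations of the vertex set. -/
def treeAut (d : ℕ) : Subgroup (Equiv.Perm (Vertex d)) where
  carrier := {g | IsTreeAut g}
  one_mem' := ⟨fun _ => rfl, fun v w => ⟨w, rfl⟩⟩
  mul_mem' := by
    intro g h hg hh
    obtain ⟨hg1, hg2⟩ := hg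
    obtain ⟨hh1, hh2⟩ := hh
    refine ⟨fun v => ?_, fun v w => ?_⟩
    · simp [Equiv.Perm.mul_apply, hg1, hh1]
    · obtain ⟨t, ht⟩ := hh2 v w
      simp only [Equiv.Perm.mul_apply]
      rw [← ht]
      exact hg2 (h v) t
  inv_mem' := by
    intro g hgmem
    obtain ⟨hg1, hg2⟩ := hgmem
    have hg : IsTreeAut g := ⟨hg1, hg2⟩
    have hlen' : ∀ v : Vertex d, (g⁻¹ v).length = v.length := by
      intro v
      conv_rhs => rw [← (Equiv.Perm.eq_inv_iff_eq.mp rfl : g (g⁻¹ v) = v)]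
      rw [hg1]
    refine ⟨hlen', fun v w => ?_⟩
    have hle : (g⁻¹ v).length ≤ (g⁻¹ (v ++ w)).length := by
      have h1 := hlen' v
      have h2 := hlen' (v ++ w)
      rw [List.length_append] at h2
      omega
    have htp : (g⁻¹ (v ++ w)).take (g⁻¹ v).length <+: g⁻¹ (v ++ w) :=
      List.take_prefix _ _
    have hgtp : g ((g⁻¹ (v ++ w)).take (g⁻¹ v).length) <+: v ++ w := by
      have := hg.prefix_mono htp
      rwa [show g (g⁻¹ (v ++ w)) = v ++ w from Equiv.Perm.eq_inv_iff_eq.mp rfl] at this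
    have hlen_tp : (g ((g⁻¹ (v ++ w)).take (g⁻¹ v).length)).length = v.length := by
      rw [hg1, List.length_take, min_eq_left hle, hlen' v]
    have hveq : g ((g⁻¹ (v ++ w)).take (g⁻¹ v).length) = v := by
      have h1 := List.prefix_iff_eq_take.mp hgtp
      have h2 := List.prefix_iff_eq_take.mp (List.prefix_append v w)
      rw [h1, hlen_tp]
      exact h2.symm
    have hkey : (g⁻¹ (v ++ w)).take (g⁻¹ v).length = g⁻¹ v := by
      apply g.injective
      rw [hveq, show g (g⁻¹ v) = v from Equiv.Perm.eq_inv_iff_eq.mp rfl]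
    rw [← hkey]
    exact htp

theorem Equiv.Perm.apply_inv_self {α : Type*} (f : Equiv.Perm α) (x : α) : f (f⁻¹ x) = x :=
  Equiv.apply_symm_apply f x

theorem Equiv.Perm.inv_apply_self {α : Type*} (f : Equiv.Perm α) (x : α) : f⁻¹ (f x) = x :=
  Equiv.symm_apply_apply f x

open scoped Classical in
/-- The state (section) `g|_v` of `g` at the vertex `v` : the unique
automorphism satisfying `g (v ++ w) = g v ++ (g|_v) w` for all `w`. -/
noncomputable def state {d : ℕ} (g : Equiv.Perm (Vertex d)) (v : Vertex d) :
    Equiv.Perm (Vertex d) :=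
  if h : Function.Bijective (fun w : Vertex d => (g (v ++ w)).drop v.length) then
    Equiv.ofBijective _ h
  else 1

/-- A finite-state automorphism: one having finitely many states.  The
finite-state automorphisms form the group `F(X)`. -/
def FiniteState {d : ℕ} (g : Equiv.Perm (Vertex d)) : Prop :=
  (Set.range fun v : Vertex d => state g v).Finite

/-- The cardinality of the orbit `Orb_a(v)` of the vertex `v` under the cyclic
group generated by `a`. -/
noncomputable def orbitCard {d : ℕ} (a : Equiv.Perm (Vertex d)) (v : Vertex d) : ℕ :=
  Nat.card (Set.range fun n : ℤ => (a ^ n) v)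

/-- The orbit-signalizer `OS(a) = { a^m|_v : v ∈ X^*, m = |Orb_a(v)| }`. -/
noncomputable def OS {d : ℕ} (a : Equiv.Perm (Vertex d)) : Set (Equiv.Perm (Vertex d)) :=
  {s | ∃ v : Vertex d, s = state (a ^ orbitCard a v) v}

/-- `a` has finite orbit-signalizer. -/
def FiniteOS {d : ℕ} (a : Equiv.Perm (Vertex d)) : Prop := (OS a).Finite

/-- A self-similar (state-closed) subgroup. -/
def SelfSimilar {d : ℕ} (G : Subgroup (Equiv.Perm (Vertex d))) : Prop :=
  ∀ g ∈ G, ∀ v : Vertex d, state g v ∈ G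

/-- A contracting group: there is a finite set `N ⊆ G` such that every
`g ∈ G` has all its states in `N` from some level on. -/
def ContractingGroup {d : ℕ} (G : Subgroup (Equiv.Perm (Vertex d))) : Prop :=
  ∃ N : Set (Equiv.Perm (Vertex d)), N.Finite ∧ N ⊆ (G : Set (Equiv.Perm (Vertex d))) ∧
    ∀ g ∈ G, ∃ n : ℕ, ∀ v : Vertex d, n ≤ v.length → state g v ∈ N

/-- A contracting automorphism: the self-similar group generated by all of its
states is contracting. -/
def ContractingAut {d : ℕ} (f : Equiv.Perm (Vertex d)) : Prop :=
  ContractingGroup (Subgroup.closure (Set.range fun v : Vertex d => state f v))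

/-- The activity sequence `θ_k(g)`: the number of vertices `v` of level `k`
whose state `g|_v` acts nontrivially on the first level `X`. -/
noncomputable def theta {d : ℕ} (g : Equiv.Perm (Vertex d)) (k : ℕ) : ℕ :=
  Nat.card {v : Vertex d // v.length = k ∧ ∃ x : Fin d, state g v [x] ≠ [x]}

/-- A bounded automorphism: a finite-state automorphism with bounded activity
sequence.  The bounded automorphisms form the group `Pol(0)`. -/
def BoundedAut {d : ℕ} (g : Equiv.Perm (Vertex d)) : Prop :=
  FiniteState g ∧ ∃ C : ℕ, ∀ k : ℕ, theta g k ≤ C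

/-- A polynomial automorphism (an element of `Pol(∞)`): a finite-state
automorphism whose activity sequence is polynomially bounded. -/
def PolyAut {d : ℕ} (g : Equiv.Perm (Vertex d)) : Prop :=
  FiniteState g ∧ ∃ p : Polynomial ℕ, ∀ k : ℕ, theta g k ≤ p.eval k

/-- A finitary automorphism (an element of `Pol(-1)`): all states at some
level are trivial. -/
def Finitary {d : ℕ} (g : Equiv.Perm (Vertex d)) : Prop :=
  ∃ k : ℕ, ∀ v : Vertex d, v.length = k → state g v = 1

/-- A functionally recursive automorphism: a member of some finitely generated
self-similar subgroup of `Aut(T)`.  These form the group `FR(X)`. -/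
def FunctionallyRecursive {d : ℕ} (g : Equiv.Perm (Vertex d)) : Prop :=
  ∃ G : Subgroup (Equiv.Perm (Vertex d)), G ≤ treeAut d ∧ SelfSimilar G ∧
    (∃ S : Set (Equiv.Perm (Vertex d)), S.Finite ∧ G = Subgroup.closure S) ∧ g ∈ G
namespace TreeDev

theorem mem_treeAut' {d : ℕ} {g : Equiv.Perm (Vertex d)} : g ∈ treeAut d ↔ IsTreeAut g :=
  Iff.rfl

variable {d : ℕ} {g h : Equiv.Perm (Vertex d)}

theorem len_eq (hg : g ∈ treeAut d) (v : Vertex d) :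
    (g v).length = v.length := (mem_treeAut'.1 hg).1 v

theorem apply_append_drop (hg : g ∈ treeAut d) (v w : Vertex d) :
    g (v ++ w) = g v ++ (g (v ++ w)).drop v.length := by
  obtain ⟨t, ht⟩ := (mem_treeAut'.1 hg).2 v w
  have hl : (g v).length = v.length := len_eq hg v
  rw [← ht]
  congr 1
  rw [← hl, List.drop_left]

theorem drop_bijective (hg : g ∈ treeAut d) (v : Vertex d) :
    Function.Bijective (fun w : Vertex d => (g (v ++ w)).drop v.length) := by
  constructor
  · intro w₁ w₂ hww
    simp only at hww
    have h1 := apply_append_drop hg v w₁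
    have h2 := apply_append_drop hg v w₂
    rw [hww] at h1
    exact List.append_cancel_left (g.injective (h1.trans h2.symm))
  · intro u
    have hginv : g⁻¹ ∈ treeAut d := (treeAut d).inv_mem hg
    refine ⟨(g⁻¹ (g v ++ u)).drop v.length, ?_⟩
    have h1 : g⁻¹ (g v ++ u) = v ++ (g⁻¹ (g v ++ u)).drop v.length := by
      have h2 := apply_append_drop hginv (g v) u
      rw [Equiv.Perm.inv_apply_self, len_eq hg] at h2
      exact h2
    simp only
    rw [← h1, Equiv.Perm.apply_inv_self, ← len_eq hg v, List.drop_left]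

theorem state_apply (hg : g ∈ treeAut d) (v w : Vertex d) :
    state g v w = (g (v ++ w)).drop v.length := by
  rw [state, dif_pos (drop_bijective hg v)]
  rfl

theorem state_append (hg : g ∈ treeAut d) (v w : Vertex d) :
    g (v ++ w) = g v ++ state g v w := by
  rw [state_apply hg]
  exact apply_append_drop hg v w

theorem state_len (hg : g ∈ treeAut d) (v w : Vertex d) :
    (state g v w).length = w.length := by
  have h1 := congrArg List.length (state_append hg v w)
  rw [List.length_append] at h1
  have h2 : (g (v ++ w)).length = v.length + w.length := by
    rw [len_eq hg, List.length_append]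
  have h3 : (g v).length = v.length := len_eq hg v
  omega

theorem state_mem (hg : g ∈ treeAut d) (v : Vertex d) : state g v ∈ treeAut d := by
  rw [mem_treeAut']
  refine ⟨state_len hg v, fun u w => ?_⟩
  rw [state_apply hg, state_apply hg]
  have hp : g (v ++ u) <+: g (v ++ (u ++ w)) := by
    have := (mem_treeAut'.1 hg).2 (v ++ u) w
    rwa [List.append_assoc] at this
  exact hp.drop v.length

theorem state_one (v : Vertex d) : state (1 : Equiv.Perm (Vertex d)) v = 1 := by
  ext w
  rw [state_apply (one_mem _) v w]
  simp

theorem state_nil (hg : g ∈ treeAut d) : state g ([] : Vertex d) = g := by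
  ext w
  rw [state_apply hg]
  simp

theorem state_mul (hg : g ∈ treeAut d) (hh : h ∈ treeAut d) (v : Vertex d) :
    state (g * h) v = state g (h v) * state h v := by
  have hgh : g * h ∈ treeAut d := mul_mem hg hh
  refine Equiv.ext fun w => ?_
  rw [state_apply hgh, Equiv.Perm.mul_apply, Equiv.Perm.mul_apply,
    state_apply hg (h v), ← state_append hh, len_eq hh]

theorem state_inv (hg : g ∈ treeAut d) (v : Vertex d) :
    state g⁻¹ v = (state g (g⁻¹ v))⁻¹ := by
  have h1 : state (g * g⁻¹) v = state g (g⁻¹ v) * state g⁻¹ v :=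
    state_mul hg (inv_mem hg) v
  rw [mul_inv_cancel, state_one] at h1
  have h2 := eq_inv_of_mul_eq_one_left h1.symm
  rw [h2, inv_inv]

theorem state_state (hg : g ∈ treeAut d) (u v : Vertex d) :
    state g (u ++ v) = state (state g u) v := by
  ext w
  rw [state_apply hg, state_apply (state_mem hg u), state_apply hg, List.append_assoc,
    List.length_append, ← List.drop_drop]

theorem state_pow_of_fixed (hg : g ∈ treeAut d) {v : Vertex d} (hv : g v = v) (n : ℕ) :
    state (g ^ n) v = (state g v) ^ n := by
  induction n with
  | zero => simp [state_one]
  | succ n ih =>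
    have hfix : (g ^ n) v = v := Function.IsFixedPt.perm_pow hv n
    rw [pow_succ', state_mul hg (pow_mem hg n) v, hfix, ih, pow_succ']

end TreeDev

set_option linter.unusedSectionVars false

section Orbit

variable {α : Type*} [DecidableEq α] {g : Equiv.Perm α} {x : α}

theorem orbit_exists_period (hfin : (Set.range fun n : ℤ => (g ^ n) x).Finite) :
    ∃ p : ℕ, 0 < p ∧ (g ^ p) x = x := by
  have hni : ¬ Function.Injective (fun n : ℕ => (g ^ (n : ℤ)) x) := by
    intro hinj
    have hsub : Set.range (fun n : ℕ => (g ^ (n : ℤ)) x) ⊆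
        Set.range (fun n : ℤ => (g ^ n) x) := by
      rintro _ ⟨n, rfl⟩; exact ⟨n, rfl⟩
    exact (Set.infinite_range_of_injective hinj) (hfin.subset hsub)
  rw [Function.not_injective_iff] at hni
  obtain ⟨n₁, n₂, heq, hne⟩ := hni
  rcases Nat.lt_or_gt_of_ne hne with hlt | hlt
  · refine ⟨n₂ - n₁, by omega, ?_⟩
    apply (g ^ n₁).injective
    have : (g ^ n₁) ((g ^ (n₂ - n₁)) x) = (g ^ n₂) x := by
      rw [← Equiv.Perm.mul_apply, ← pow_add]
      congr 2
      omega
    simp only [zpow_natCast] at heq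
    rw [this, heq]
  · refine ⟨n₁ - n₂, by omega, ?_⟩
    apply (g ^ n₂).injective
    have : (g ^ n₂) ((g ^ (n₁ - n₂)) x) = (g ^ n₁) x := by
      rw [← Equiv.Perm.mul_apply, ← pow_add]
      congr 2
      omega
    simp only [zpow_natCast] at heq
    rw [this, heq.symm]

open scoped Classical in
noncomputable def minPeriod (g : Equiv.Perm α) (x : α) : ℕ :=
  if h : ∃ p : ℕ, 0 < p ∧ (g ^ p) x = x then Nat.find h else 0

theorem minPeriod_spec (hfin : (Set.range fun n : ℤ => (g ^ n) x).Finite) :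
    0 < minPeriod g x ∧ (g ^ minPeriod g x) x = x ∧
      ∀ r : ℕ, 0 < r → r < minPeriod g x → (g ^ r) x ≠ x := by
  classical
  have h := orbit_exists_period hfin
  rw [minPeriod, dif_pos h]
  refine ⟨(Nat.find_spec h).1, (Nat.find_spec h).2, fun r hr hrm hrx => ?_⟩
  exact Nat.find_min h hrm ⟨hr, hrx⟩

theorem zpow_fix_iff (hfin : (Set.range fun n : ℤ => (g ^ n) x).Finite) (n : ℤ) :
    (g ^ n) x = x ↔ (minPeriod g x : ℤ) ∣ n := by
  obtain ⟨hpos, hfix, hmin⟩ := minPeriod_spec hfin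
  set p := minPeriod g x with hp
  constructor
  · intro hn
    have hfixz : ((g ^ (p : ℤ)) x) = x := by rw [zpow_natCast]; exact hfix
    by_contra hndvd
    have hr0 : 0 ≤ n % p := Int.emod_nonneg n (by exact_mod_cast hpos.ne')
    have hrlt : n % p < p := Int.emod_lt_of_pos n (by exact_mod_cast hpos)
    have hdecomp : (g ^ (n % p)) x = x := by
      have h1 : (g ^ (n % p)) ((g ^ ((p : ℤ) * (n / p))) x) = (g ^ n) x := by
        rw [← Equiv.Perm.mul_apply, ← zpow_add]
        rw [Int.emod_add_mul_ediv]
      have h2 : (g ^ ((p : ℤ) * (n / p))) x = x := by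
        rw [zpow_mul]
        exact Function.IsFixedPt.perm_zpow hfixz _
      rw [h2] at h1
      rw [h1, hn]
    have hrne : n % p ≠ 0 := by
      intro h0
      exact hndvd (Int.dvd_of_emod_eq_zero h0)
    have := hmin (n % p).toNat (by omega) (by omega)
    rw [← zpow_natCast, Int.toNat_of_nonneg hr0] at this
    exact this hdecomp
  · rintro ⟨k, rfl⟩
    have hfixz : ((g ^ ((p : ℕ) : ℤ)) x) = x := by rw [zpow_natCast]; exact hfix
    rw [zpow_mul]
    exact Function.IsFixedPt.perm_zpow hfixz k

theorem orbitRange_eq (hfin : (Set.range fun n : ℤ => (g ^ n) x).Finite) :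
    (Set.range fun n : ℤ => (g ^ n) x) =
      ((Finset.range (minPeriod g x)).image fun t : ℕ => (g ^ t) x : Finset α) := by
  classical
  obtain ⟨hpos, hfix, hmin⟩ := minPeriod_spec hfin
  set p := minPeriod g x
  ext y
  simp only [Set.mem_range, Finset.coe_image, Set.mem_image, Finset.mem_coe,
    Finset.mem_range]
  constructor
  · rintro ⟨n, rfl⟩
    refine ⟨(n % p).toNat, ?_, ?_⟩
    · have h3 : n % p < p := Int.emod_lt_of_pos n (by exact_mod_cast hpos)
      have hr0 : 0 ≤ n % p := Int.emod_nonneg n (by exact_mod_cast hpos.ne')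
      omega
    · have hr0 : 0 ≤ n % p := Int.emod_nonneg n (by exact_mod_cast hpos.ne')
      rw [← zpow_natCast, Int.toNat_of_nonneg hr0]
      have h1 : (g ^ (n % p)) ((g ^ ((p : ℤ) * (n / p))) x) = (g ^ n) x := by
        rw [← Equiv.Perm.mul_apply, ← zpow_add]
        rw [Int.emod_add_mul_ediv]
      have h2 : (g ^ ((p : ℤ) * (n / p))) x = x := by
        rw [zpow_mul]
        exact Function.IsFixedPt.perm_zpow (by rw [zpow_natCast]; exact hfix) _
      rw [h2] at h1
      exact h1
  · rintro ⟨t, _, rfl⟩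
    exact ⟨t, by rw [zpow_natCast]⟩

theorem orbit_injOn (hfin : (Set.range fun n : ℤ => (g ^ n) x).Finite) :
    ∀ i < minPeriod g x, ∀ j < minPeriod g x, (g ^ i) x = (g ^ j) x → i = j := by
  intro i hi j hj hij
  obtain ⟨hpos, hfix, hmin⟩ := minPeriod_spec hfin
  have h1 : (g ^ ((i : ℤ) - j)) x = x := by
    apply (g ^ (j : ℤ)).injective
    rw [← Equiv.Perm.mul_apply, ← zpow_add]
    have : (j : ℤ) + ((i : ℤ) - j) = i := by ring
    rw [this, zpow_natCast, zpow_natCast, hij]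
  rw [zpow_fix_iff hfin] at h1
  rcases h1 with ⟨k, hk'⟩
  have hpz : (0 : ℤ) < (minPeriod g x : ℤ) := by exact_mod_cast hpos
  have hb1 : (minPeriod g x : ℤ) * k < minPeriod g x := by rw [← hk']; omega
  have hb2 : -(minPeriod g x : ℤ) < (minPeriod g x : ℤ) * k := by rw [← hk']; omega
  have hk0 : k = 0 := by
    by_contra h0
    rcases lt_or_gt_of_ne h0 with hneg | hposk
    · have : (minPeriod g x : ℤ) * k ≤ -(minPeriod g x : ℤ) := by nlinarith
      linarith
    · have : (minPeriod g x : ℤ) ≤ (minPeriod g x : ℤ) * k := by nlinarith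
      linarith
  subst hk0
  simp only [mul_zero] at hk'
  omega

theorem card_orbit_eq (hfin : (Set.range fun n : ℤ => (g ^ n) x).Finite) :
    Nat.card (Set.range fun n : ℤ => (g ^ n) x) = minPeriod g x := by
  classical
  rw [Nat.card_coe_set_eq, orbitRange_eq hfin, Set.ncard_coe_finset,
    Finset.card_image_of_injOn, Finset.card_range]
  intro i hi j hj
  simp only [Finset.mem_coe, Finset.mem_range] at hi hj
  exact orbit_injOn hfin i hi j hj

end Orbit

namespace TreeDev

variable {d : ℕ} {g s : Equiv.Perm (Vertex d)}

theorem orbit_finite (hg : g ∈ treeAut d) (v : Vertex d) :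
    (Set.range fun n : ℤ => (g ^ n) v).Finite := by
  apply (List.finite_length_eq (Fin d) v.length).subset
  rintro _ ⟨n, rfl⟩
  exact len_eq (zpow_mem hg n) v

theorem orbitCard_eq_minPeriod (hg : g ∈ treeAut d) (v : Vertex d) :
    orbitCard g v = minPeriod g v :=
  card_orbit_eq (orbit_finite hg v)

theorem orbitCard_pos (hg : g ∈ treeAut d) (v : Vertex d) : 0 < orbitCard g v := by
  rw [orbitCard_eq_minPeriod hg]
  exact (minPeriod_spec (orbit_finite hg v)).1

theorem pow_orbitCard_fix (hg : g ∈ treeAut d) (v : Vertex d) :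
    (g ^ orbitCard g v) v = v := by
  rw [orbitCard_eq_minPeriod hg]
  exact (minPeriod_spec (orbit_finite hg v)).2.1

theorem zpow_fix_iff_orbitCard (hg : g ∈ treeAut d) (v : Vertex d) (n : ℤ) :
    (g ^ n) v = v ↔ (orbitCard g v : ℤ) ∣ n := by
  rw [orbitCard_eq_minPeriod hg]
  exact zpow_fix_iff (orbit_finite hg v) n

theorem pow_fix_iff_orbitCard (hg : g ∈ treeAut d) (v : Vertex d) (n : ℕ) :
    (g ^ n) v = v ↔ orbitCard g v ∣ n := by
  have := zpow_fix_iff_orbitCard hg v (n : ℤ)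
  rw [zpow_natCast] at this
  rw [this, Int.natCast_dvd_natCast]

theorem orbitCard_distinct (hg : g ∈ treeAut d) (v : Vertex d) :
    ∀ i < orbitCard g v, ∀ j < orbitCard g v, (g ^ i) v = (g ^ j) v → i = j := by
  intro i hi j hj
  rw [orbitCard_eq_minPeriod hg] at hi hj
  exact orbit_injOn (orbit_finite hg v) i hi j hj

theorem orbitCard_zpow_apply (hg : g ∈ treeAut d) (v : Vertex d) (k : ℤ) :
    orbitCard g ((g ^ k) v) = orbitCard g v := by
  have hset : (Set.range fun n : ℤ => (g ^ n) ((g ^ k) v)) =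
      Set.range fun n : ℤ => (g ^ n) v := by
    ext y
    simp only [Set.mem_range]
    constructor
    · rintro ⟨n, rfl⟩
      exact ⟨n + k, by rw [zpow_add, Equiv.Perm.mul_apply]⟩
    · rintro ⟨n, rfl⟩
      exact ⟨n - k, by rw [← Equiv.Perm.mul_apply, ← zpow_add, sub_add_cancel]⟩
  unfold orbitCard
  rw [hset]

theorem orbitCard_inv_pow_apply (hg : g ∈ treeAut d) (v : Vertex d) (k : ℕ) :
    orbitCard g (((g ^ k)⁻¹) v) = orbitCard g v := by
  have := orbitCard_zpow_apply hg v (-(k : ℤ))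
  rw [zpow_neg, zpow_natCast] at this
  exact this

theorem orbitCard_pow_apply (hg : g ∈ treeAut d) (v : Vertex d) (k : ℕ) :
    orbitCard g ((g ^ k) v) = orbitCard g v := by
  have := orbitCard_zpow_apply hg v (k : ℤ)
  rw [zpow_natCast] at this
  exact this

theorem orbitCard_char (hg : g ∈ treeAut d) (v : Vertex d) {q : ℕ} (hq : 0 < q)
    (hfix : (g ^ q) v = v) (hmin : ∀ r : ℕ, 0 < r → r < q → (g ^ r) v ≠ v) :
    orbitCard g v = q := by
  have h1 : orbitCard g v ∣ q := (pow_fix_iff_orbitCard hg v q).1 hfix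
  have h2 : orbitCard g v ≤ q := Nat.le_of_dvd hq h1
  rcases lt_or_eq_of_le h2 with h | h
  · exact absurd (pow_orbitCard_fix hg v) (hmin _ (orbitCard_pos hg v) h)
  · exact h

theorem orbitCard_nil (hg : g ∈ treeAut d) : orbitCard g ([] : Vertex d) = 1 := by
  refine orbitCard_char hg [] one_pos ?_ (by omega)
  have : ((g ^ 1) ([] : Vertex d)).length = 0 := len_eq (pow_mem hg 1) []
  exact List.length_eq_zero_iff.1 this

theorem orbitCard_cons (hs : s ∈ treeAut d) (x0 : Fin d) (w : Vertex d) :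
    orbitCard s (([x0] : Vertex d) ++ w) =
      orbitCard s [x0] *
        orbitCard (state (s ^ orbitCard s [x0]) [x0]) w := by
  set m := orbitCard s [x0] with hm
  set b := state (s ^ m) [x0] with hb
  have hbm : b ∈ treeAut d := state_mem (pow_mem hs m) [x0]
  have hfixm : (s ^ m) [x0] = [x0] := pow_orbitCard_fix hs [x0]
  set m' := orbitCard b w with hm'
  have key : ∀ t : ℕ, (s ^ (m * t)) (([x0] : Vertex d) ++ w) = [x0] ++ (b ^ t) w := by
    intro t
    rw [pow_mul, state_append (pow_mem (pow_mem hs m) t) [x0] w,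
      Function.IsFixedPt.perm_pow hfixm t,
      state_pow_of_fixed (pow_mem hs m) hfixm t]
  refine orbitCard_char hs _ (Nat.mul_pos (orbitCard_pos hs [x0]) (orbitCard_pos hbm w)) ?_ ?_
  · rw [key m', pow_orbitCard_fix hbm w]
  · intro r hr hrlt hfixr
    have hsplit : (s ^ r) (([x0] : Vertex d) ++ w) = (s ^ r) [x0] ++ state (s ^ r) [x0] w :=
      state_append (pow_mem hs r) [x0] w
    rw [hsplit] at hfixr
    have hlen : ((s ^ r) ([x0] : Vertex d)).length = ([x0] : Vertex d).length :=
      len_eq (pow_mem hs r) [x0]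
    obtain ⟨h1, h2⟩ := List.append_inj hfixr hlen
    have hdvd : m ∣ r := (pow_fix_iff_orbitCard hs [x0] r).1 h1
    obtain ⟨t, rfl⟩ := hdvd
    have h3 : (b ^ t) w = w := by
      rw [← state_pow_of_fixed (pow_mem hs m) hfixm t, ← pow_mul]
      exact h2
    have hdvd2 : m' ∣ t := (pow_fix_iff_orbitCard hbm w t).1 h3
    have : m * m' ∣ m * t := mul_dvd_mul_left m hdvd2
    have := Nat.le_of_dvd hr this
    omega

end TreeDev

namespace TreeDev

variable {d : ℕ} {g s : Equiv.Perm (Vertex d)}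

theorem zpow_reduce (hg : g ∈ treeAut d) (v : Vertex d) (n : ℤ) :
    (g ^ n) v = (g ^ (n % (orbitCard g v : ℤ)).toNat) v := by
  have hpos : (0 : ℤ) < (orbitCard g v : ℤ) := by exact_mod_cast orbitCard_pos hg v
  have hr0 : 0 ≤ n % (orbitCard g v : ℤ) := Int.emod_nonneg n hpos.ne'
  rw [← zpow_natCast g, Int.toNat_of_nonneg hr0]
  conv_lhs => rw [← Int.emod_add_mul_ediv n (orbitCard g v : ℤ)]
  rw [zpow_add, Equiv.Perm.mul_apply]
  congr 1
  rw [zpow_mul]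
  refine Function.IsFixedPt.perm_zpow ?_ _
  show (g ^ ((orbitCard g v : ℕ) : ℤ)) v = v
  rw [zpow_natCast]
  exact pow_orbitCard_fix hg v

open scoped Classical in
noncomputable def rep (s : Equiv.Perm (Vertex d)) (y : Fin d) : Fin d :=
  (Finset.univ.filter fun z : Fin d => ∃ n : ℤ, (s ^ n) ([y] : Vertex d) = [z]).min'
    ⟨y, Finset.mem_filter.2 ⟨Finset.mem_univ y, 0, by simp⟩⟩

theorem rep_mem (s : Equiv.Perm (Vertex d)) (y : Fin d) :
    ∃ n : ℤ, (s ^ n) ([y] : Vertex d) = [rep s y] := by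
  classical
  have := Finset.min'_mem
    (Finset.univ.filter fun z : Fin d => ∃ n : ℤ, (s ^ n) ([y] : Vertex d) = [z])
    ⟨y, Finset.mem_filter.2 ⟨Finset.mem_univ y, 0, by simp⟩⟩
  rw [Finset.mem_filter] at this
  exact this.2

theorem rep_congr (s : Equiv.Perm (Vertex d)) {y y' : Fin d} {k : ℤ}
    (h : (s ^ k) ([y] : Vertex d) = [y']) : rep s y' = rep s y := by
  classical
  unfold rep
  congr 1
  ext z
  simp only [Finset.mem_filter, Finset.mem_univ, true_and]
  constructor
  · rintro ⟨n, hn⟩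
    exact ⟨n + k, by rw [zpow_add, Equiv.Perm.mul_apply, h, hn]⟩
  · rintro ⟨n, hn⟩
    refine ⟨n - k, ?_⟩
    rw [← h, ← Equiv.Perm.mul_apply, ← zpow_add, sub_add_cancel, hn]

open scoped Classical in
noncomputable def idx (s : Equiv.Perm (Vertex d)) (y : Fin d) : ℕ :=
  if h : ∃ i : ℕ, (s ^ i) ([rep s y] : Vertex d) = [y] then Nat.find h else 0

theorem idx_exists (hs : s ∈ treeAut d) (y : Fin d) :
    ∃ i : ℕ, (s ^ i) ([rep s y] : Vertex d) = [y] := by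
  obtain ⟨n, hn⟩ := rep_mem s y
  have h1 : (s ^ (-n)) ([rep s y] : Vertex d) = [y] := by
    rw [← hn, ← Equiv.Perm.mul_apply, ← zpow_add, neg_add_cancel, zpow_zero,
      Equiv.Perm.one_apply]
  refine ⟨((-n) % (orbitCard s ([rep s y] : Vertex d) : ℤ)).toNat, ?_⟩
  rw [← zpow_reduce hs _ (-n)]
  exact h1

theorem idx_eq_find (hs : s ∈ treeAut d) (y : Fin d) :
    idx s y = Nat.find (idx_exists hs y) := by
  simp only [idx]
  rw [dif_pos (idx_exists hs y)]

theorem idx_spec (hs : s ∈ treeAut d) (y : Fin d) :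
    (s ^ idx s y) ([rep s y] : Vertex d) = [y] := by
  rw [idx_eq_find hs y]
  exact Nat.find_spec (idx_exists hs y)

theorem idx_lt (hs : s ∈ treeAut d) (y : Fin d) :
    idx s y < orbitCard s ([rep s y] : Vertex d) := by
  classical
  by_contra hle
  push_neg at hle
  set m := orbitCard s ([rep s y] : Vertex d) with hm
  have hmpos : 0 < m := orbitCard_pos hs _
  have h1 : (s ^ (idx s y - m)) ([rep s y] : Vertex d) = [y] := by
    have : (s ^ (idx s y - m)) ((s ^ m) ([rep s y] : Vertex d)) =
        (s ^ idx s y) ([rep s y] : Vertex d) := by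
      rw [← Equiv.Perm.mul_apply, ← pow_add]
      congr 2
      omega
    rw [pow_orbitCard_fix hs] at this
    rw [this, idx_spec hs y]
  rw [idx_eq_find hs y] at hle h1
  exact Nat.find_min (idx_exists hs y) (by omega) h1

theorem idx_unique (hs : s ∈ treeAut d) (y : Fin d) {i : ℕ}
    (hi : i < orbitCard s ([rep s y] : Vertex d))
    (h : (s ^ i) ([rep s y] : Vertex d) = [y]) : i = idx s y := by
  exact orbitCard_distinct hs _ i hi _ (idx_lt hs y) (by rw [h, idx_spec hs y])

theorem exists_letter (hs : s ∈ treeAut d) (x : Fin d) :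
    ∃ y : Fin d, s ([x] : Vertex d) = [y] := by
  have : (s ([x] : Vertex d)).length = 1 := len_eq hs [x]
  rw [List.length_eq_one_iff] at this
  exact this

theorem orbitCard_letter (hs : s ∈ treeAut d) (y : Fin d) :
    orbitCard s ([y] : Vertex d) = orbitCard s ([rep s y] : Vertex d) := by
  rw [← idx_spec hs y, orbitCard_pow_apply hs]

end TreeDev

namespace TreeDev

variable {d : ℕ} {g s : Equiv.Perm (Vertex d)}

noncomputable def Caux : ℕ → Equiv.Perm (Vertex d) → Vertex d → Vertex d
  | 0, _, _ => []
  | n + 1, s, u =>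
    match u with
    | [] => []
    | y :: w =>
      ((s ^ idx s y)⁻¹)
        (([rep s y] : Vertex d) ++
          Caux n (state (s ^ orbitCard s ([rep s y] : Vertex d)) [rep s y])
            ((state (s ^ idx s y) [rep s y])⁻¹ w))

noncomputable def Cfun (s : Equiv.Perm (Vertex d)) (u : Vertex d) : Vertex d :=
  Caux u.length s u

theorem Cfun_nil (s : Equiv.Perm (Vertex d)) : Cfun s [] = [] := rfl

theorem Caux_nil (n : ℕ) (s : Equiv.Perm (Vertex d)) : Caux n s [] = [] := by
  cases n <;> rfl

theorem caux_eq_cfun : ∀ (n : ℕ) (s : Equiv.Perm (Vertex d)), s ∈ treeAut d →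
    ∀ u : Vertex d, u.length ≤ n → Caux n s u = Cfun s u := by
  intro n
  induction n with
  | zero =>
    intro s hs u hu
    have : u = [] := List.eq_nil_of_length_eq_zero (by omega)
    subst this
    rfl
  | succ n ih =>
    intro s hs u hu
    match u with
    | [] => rw [Caux_nil, Cfun_nil]
    | y :: w =>
      have hb : state (s ^ orbitCard s ([rep s y] : Vertex d)) [rep s y] ∈ treeAut d :=
        state_mem (pow_mem hs _) _
      have hq : ((state (s ^ idx s y) [rep s y])⁻¹ : Equiv.Perm (Vertex d)) ∈ treeAut d :=
        inv_mem (state_mem (pow_mem hs _) _)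
      have hlw : ((state (s ^ idx s y) [rep s y])⁻¹ w).length = w.length := len_eq hq w
      have hcw : Caux w.length (state (s ^ orbitCard s ([rep s y] : Vertex d)) [rep s y])
            ((state (s ^ idx s y) [rep s y])⁻¹ w) =
          Cfun (state (s ^ orbitCard s ([rep s y] : Vertex d)) [rep s y])
            ((state (s ^ idx s y) [rep s y])⁻¹ w) := by
        rw [Cfun, hlw]
      show ((s ^ idx s y)⁻¹)
          (([rep s y] : Vertex d) ++ Caux n _ ((state (s ^ idx s y) [rep s y])⁻¹ w)) = _
      rw [ih _ hb _ (by rw [hlw]; simp only [List.length_cons] at hu; omega)]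
      show _ = Caux (w.length + 1) s (y :: w)
      show _ = ((s ^ idx s y)⁻¹)
          (([rep s y] : Vertex d) ++ Caux (w.length) _ ((state (s ^ idx s y) [rep s y])⁻¹ w))
      rw [hcw]

theorem Cfun_cons (hs : s ∈ treeAut d) (y : Fin d) (w : Vertex d) :
    Cfun s (y :: w) =
      ((s ^ idx s y)⁻¹)
        (([rep s y] : Vertex d) ++
          Cfun (state (s ^ orbitCard s ([rep s y] : Vertex d)) [rep s y])
            ((state (s ^ idx s y) [rep s y])⁻¹ w)) := by
  have hb : state (s ^ orbitCard s ([rep s y] : Vertex d)) [rep s y] ∈ treeAut d :=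
    state_mem (pow_mem hs _) _
  have hq : ((state (s ^ idx s y) [rep s y])⁻¹ : Equiv.Perm (Vertex d)) ∈ treeAut d :=
    inv_mem (state_mem (pow_mem hs _) _)
  have hlw : ((state (s ^ idx s y) [rep s y])⁻¹ w).length = w.length := len_eq hq w
  show Caux (w.length + 1) s (y :: w) = _
  show ((s ^ idx s y)⁻¹)
      (([rep s y] : Vertex d) ++ Caux w.length _ ((state (s ^ idx s y) [rep s y])⁻¹ w)) = _
  rw [caux_eq_cfun _ _ hb _ (le_of_eq hlw)]

theorem rep_rep (s : Equiv.Perm (Vertex d)) (y : Fin d) : rep s (rep s y) = rep s y := by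
  obtain ⟨n, hn⟩ := rep_mem s y
  exact rep_congr s hn

theorem Cfun_length : ∀ (n : ℕ) (s : Equiv.Perm (Vertex d)), s ∈ treeAut d →
    ∀ u : Vertex d, u.length = n → (Cfun s u).length = u.length := by
  intro n
  induction n with
  | zero =>
    intro s hs u hu
    have : u = [] := List.eq_nil_of_length_eq_zero hu
    subst this
    rfl
  | succ n ih =>
    intro s hs u hu
    match u with
    | y :: w =>
      have hb : state (s ^ orbitCard s ([rep s y] : Vertex d)) [rep s y] ∈ treeAut d :=
        state_mem (pow_mem hs _) _
      have hq : ((state (s ^ idx s y) [rep s y])⁻¹ : Equiv.Perm (Vertex d)) ∈ treeAut d :=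
        inv_mem (state_mem (pow_mem hs _) _)
      have hlw : ((state (s ^ idx s y) [rep s y])⁻¹ w).length = w.length := len_eq hq w
      rw [Cfun_cons hs, len_eq (inv_mem (pow_mem hs _)), List.length_append,
        ih _ hb _ (by rw [hlw]; simp only [List.length_cons] at hu; omega), hlw]
      simp only [List.length_cons, List.length_nil]
      omega

theorem Cfun_prefix : ∀ (n : ℕ) (s : Equiv.Perm (Vertex d)), s ∈ treeAut d →
    ∀ u t : Vertex d, u.length = n → Cfun s u <+: Cfun s (u ++ t) := by
  intro n
  induction n with
  | zero =>
    intro s hs u t hu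
    have : u = [] := List.eq_nil_of_length_eq_zero hu
    subst this
    simp [Cfun_nil]
  | succ n ih =>
    intro s hs u t hu
    match u with
    | y :: w =>
      have hb : state (s ^ orbitCard s ([rep s y] : Vertex d)) [rep s y] ∈ treeAut d :=
        state_mem (pow_mem hs _) _
      have hqmem : (state (s ^ idx s y) [rep s y] : Equiv.Perm (Vertex d)) ∈ treeAut d :=
        state_mem (pow_mem hs _) _
      have hq : ((state (s ^ idx s y) [rep s y])⁻¹ : Equiv.Perm (Vertex d)) ∈ treeAut d :=
        inv_mem hqmem
      show Cfun s (y :: w) <+: Cfun s (y :: (w ++ t))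
      rw [Cfun_cons hs, Cfun_cons hs]
      apply IsTreeAut.prefix_mono (mem_treeAut'.1 (inv_mem (pow_mem hs _)))
      have hsplit : (state (s ^ idx s y) [rep s y])⁻¹ (w ++ t) =
          (state (s ^ idx s y) [rep s y])⁻¹ w ++
            state ((state (s ^ idx s y) [rep s y])⁻¹) w t := state_append hq w t
      rw [hsplit]
      obtain ⟨r, hr⟩ := ih _ hb ((state (s ^ idx s y) [rep s y])⁻¹ w)
        (state ((state (s ^ idx s y) [rep s y])⁻¹) w t)
        (by rw [len_eq hq]; simp only [List.length_cons] at hu; omega)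
      exact ⟨r, by rw [← hr, List.append_assoc]⟩

theorem Cfun_injective : ∀ (n : ℕ) (s : Equiv.Perm (Vertex d)), s ∈ treeAut d →
    ∀ u₁ u₂ : Vertex d, u₁.length = n → u₂.length = n → Cfun s u₁ = Cfun s u₂ → u₁ = u₂ := by
  intro n
  induction n with
  | zero =>
    intro s hs u₁ u₂ h1 h2 _
    rw [List.eq_nil_of_length_eq_zero h1, List.eq_nil_of_length_eq_zero h2]
  | succ n ih =>
    intro s hs u₁ u₂ h1 h2 heq
    match u₁, u₂ with
    | y₁ :: w₁, y₂ :: w₂ =>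
      rw [Cfun_cons hs, Cfun_cons hs] at heq
      set x₁ := rep s y₁ with hx₁
      set x₂ := rep s y₂ with hx₂
      set i₁ := idx s y₁ with hi₁
      set i₂ := idx s y₂ with hi₂
      have hsplit₁ := state_append (inv_mem (pow_mem hs i₁)) ([x₁] : Vertex d)
        (Cfun (state (s ^ orbitCard s ([x₁] : Vertex d)) [x₁])
          ((state (s ^ i₁) [x₁])⁻¹ w₁))
      have hsplit₂ := state_append (inv_mem (pow_mem hs i₂)) ([x₂] : Vertex d)
        (Cfun (state (s ^ orbitCard s ([x₂] : Vertex d)) [x₂])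
          ((state (s ^ i₂) [x₂])⁻¹ w₂))
      rw [hsplit₁, hsplit₂] at heq
      have hlen : (((s ^ i₁)⁻¹) ([x₁] : Vertex d)).length =
          (((s ^ i₂)⁻¹) ([x₂] : Vertex d)).length := by
        rw [len_eq (inv_mem (pow_mem hs i₁)), len_eq (inv_mem (pow_mem hs i₂))]
        simp
      obtain ⟨hhead, htail⟩ := List.append_inj heq hlen
      have hzp₁ : ((s ^ i₁)⁻¹) ([x₁] : Vertex d) = (s ^ (-(i₁ : ℤ))) [x₁] := by
        rw [zpow_neg, zpow_natCast]
      have hzp₂ : ((s ^ i₂)⁻¹) ([x₂] : Vertex d) = (s ^ (-(i₂ : ℤ))) [x₂] := by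
        rw [zpow_neg, zpow_natCast]
      rw [hzp₁, hzp₂] at hhead
      have hx21 : x₂ = x₁ := by
        have h3 : (s ^ ((i₂ : ℤ) + -(i₁ : ℤ))) ([x₁] : Vertex d) = [x₂] := by
          rw [zpow_add, Equiv.Perm.mul_apply, hhead, ← Equiv.Perm.mul_apply, ← zpow_add]
          simp
        have h4 : rep s x₂ = rep s x₁ := rep_congr s h3
        rw [hx₁, hx₂, rep_rep, rep_rep] at h4
        exact h4
      rw [hx21] at hhead
      have hii : i₂ = i₁ := by
        have h5 : (s ^ (i₂ : ℤ)) ([x₁] : Vertex d) = (s ^ (i₁ : ℤ)) [x₁] := by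
          have h6 := congrArg (fun l => (s ^ ((i₁ : ℤ) + (i₂ : ℤ))) l) hhead
          rw [← Equiv.Perm.mul_apply, ← Equiv.Perm.mul_apply, ← zpow_add, ← zpow_add] at h6
          have e1 : (i₁ : ℤ) + (i₂ : ℤ) + -(i₁ : ℤ) = (i₂ : ℤ) := by ring
          have e2 : (i₁ : ℤ) + (i₂ : ℤ) + -(i₂ : ℤ) = (i₁ : ℤ) := by ring
          rw [e1, e2] at h6
          exact h6
        rw [zpow_natCast, zpow_natCast] at h5
        have hlt₂ : i₂ < orbitCard s ([x₁] : Vertex d) := by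
          rw [← hx21]
          exact hi₂ ▸ idx_lt hs y₂
        exact orbitCard_distinct hs _ i₂ hlt₂ i₁ (hi₁ ▸ idx_lt hs y₁) h5
      have hy : y₁ = y₂ := by
        have e1 := idx_spec hs y₁
        have e2 := idx_spec hs y₂
        rw [← hi₁, ← hx₁] at e1
        rw [← hi₂, ← hx₂, hii, hx21] at e2
        rw [e1] at e2
        simpa using e2
      subst hy
      rw [hx21, hii] at htail
      have htail' := (state ((s ^ i₁)⁻¹) ([x₁] : Vertex d)).injective htail
      have hb : state (s ^ orbitCard s ([x₁] : Vertex d)) [x₁] ∈ treeAut d :=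
        state_mem (pow_mem hs _) _
      have hq : ((state (s ^ i₁) [x₁])⁻¹ : Equiv.Perm (Vertex d)) ∈ treeAut d :=
        inv_mem (state_mem (pow_mem hs _) _)
      have hw : w₁ = w₂ := by
        have h7 := ih _ hb _ _ (by rw [len_eq hq]; simp at h1; omega)
          (by rw [len_eq hq]; simp at h2; omega) htail'
        exact ((state (s ^ i₁) [x₁])⁻¹).injective h7
      rw [hw]

theorem Cfun_inj (hs : s ∈ treeAut d) : Function.Injective (Cfun s) := by
  intro u₁ u₂ h
  have hl : u₁.length = u₂.length := by
    have h1 := Cfun_length u₁.length s hs u₁ rfl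
    have h2 := Cfun_length u₂.length s hs u₂ rfl
    rw [← h1, ← h2, h]
  exact Cfun_injective u₁.length s hs u₁ u₂ rfl hl.symm h

theorem Cfun_bijective (hs : s ∈ treeAut d) : Function.Bijective (Cfun s) := by
  refine ⟨Cfun_inj hs, fun z => ?_⟩
  have hfin : ({l : Vertex d | l.length = z.length}).Finite := List.finite_length_eq _ _
  have hmap : Set.MapsTo (Cfun s) {l : Vertex d | l.length = z.length}
      {l : Vertex d | l.length = z.length} := by
    intro l hl
    simp only [Set.mem_setOf_eq] at hl ⊢
    rw [Cfun_length l.length s hs l rfl, hl]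
  have hbij := (hfin.injOn_iff_bijOn_of_mapsTo hmap).1 ((Cfun_inj hs).injOn)
  obtain ⟨l, _, hl⟩ := hbij.surjOn (show z ∈ {l : Vertex d | l.length = z.length} from rfl)
  exact ⟨l, hl⟩

open scoped Classical in
noncomputable def Cperm (s : Equiv.Perm (Vertex d)) : Equiv.Perm (Vertex d) :=
  if h : Function.Bijective (Cfun s) then Equiv.ofBijective _ h else 1

theorem Cperm_apply (hs : s ∈ treeAut d) (u : Vertex d) : Cperm s u = Cfun s u := by
  simp only [Cperm]
  rw [dif_pos (Cfun_bijective hs)]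
  rfl

theorem Cperm_mem (hs : s ∈ treeAut d) : Cperm s ∈ treeAut d := by
  rw [mem_treeAut']
  constructor
  · intro v
    rw [Cperm_apply hs]
    exact Cfun_length v.length s hs v rfl
  · intro v w
    rw [Cperm_apply hs, Cperm_apply hs]
    exact Cfun_prefix v.length s hs v w rfl

end TreeDev

namespace TreeDev

variable {d : ℕ} {g s : Equiv.Perm (Vertex d)}

theorem nil_fixed (hs : s ∈ treeAut d) : s ([] : Vertex d) = [] :=
  List.eq_nil_of_length_eq_zero (len_eq hs [])

theorem Cfun_conj : ∀ (n : ℕ) (s : Equiv.Perm (Vertex d)), s ∈ treeAut d →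
    ∀ u : Vertex d, u.length = n → Cfun s (s u) = s⁻¹ (Cfun s u) := by
  intro n
  induction n with
  | zero =>
    intro s hs u hu
    have : u = [] := List.eq_nil_of_length_eq_zero hu
    subst this
    rw [nil_fixed hs, Cfun_nil, nil_fixed (inv_mem hs)]
  | succ n ih =>
    intro s hs u hu
    match u with
    | y :: w =>
      simp only [List.length_cons] at hu
      set x0 := rep s y with hx0
      set i := idx s y with hi
      set m := orbitCard s ([x0] : Vertex d) with hm
      set b := state (s ^ m) [x0] with hb
      set Q := state (s ^ i) ([x0] : Vertex d) with hQ
      have hbm : b ∈ treeAut d := state_mem (pow_mem hs m) _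
      have hQm : Q ∈ treeAut d := state_mem (pow_mem hs i) _
      obtain ⟨yp, hyp⟩ := exists_letter hs y
      have hcons : s (y :: w) = yp :: (state s ([y] : Vertex d) w) := by
        have := state_append hs ([y] : Vertex d) w
        rw [hyp] at this
        exact this
      have hiy : (s ^ i) ([x0] : Vertex d) = [y] := idx_spec hs y
      have hsucc : (s ^ (i + 1)) ([x0] : Vertex d) = [yp] := by
        rw [pow_succ', Equiv.Perm.mul_apply, hiy, hyp]
      have hrepyp : rep s yp = x0 := by
        have h1 : (s ^ ((i + 1 : ℕ) : ℤ)) ([x0] : Vertex d) = [yp] := by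
          rw [zpow_natCast]
          exact hsucc
        have h2 := rep_congr s h1
        rw [hx0, rep_rep] at h2
        rw [h2, hx0]
      have hQsucc : state (s ^ (i + 1)) ([x0] : Vertex d) = state s ([y] : Vertex d) * Q := by
        rw [pow_succ', state_mul hs (pow_mem hs i), hiy]
      have hilt : i < m := hi ▸ hm ▸ idx_lt hs y
      have hsplit2 : i + 1 < m ∨ i + 1 = m := by omega
      rcases hsplit2 with hlt | heqm
      · -- case i + 1 < m
        have hidxp : idx s yp = i + 1 := by
          refine (idx_unique hs yp ?_ ?_).symm
          · rw [hrepyp, ← hm]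
            exact hlt
          · rw [hrepyp]
            exact hsucc
        rw [hcons, Cfun_cons hs yp, hidxp, hrepyp, Cfun_cons hs y, ← hx0, ← hi, ← hm, ← hb,
          ← hQ]
        have harg : (state (s ^ (i + 1)) ([x0] : Vertex d))⁻¹ (state s ([y] : Vertex d) w) =
            Q⁻¹ w := by
          rw [hQsucc, mul_inv_rev, Equiv.Perm.mul_apply, Equiv.Perm.inv_apply_self]
        rw [harg]
        rw [← Equiv.Perm.mul_apply (s⁻¹), ← mul_inv_rev, ← pow_succ]
      · -- case i + 1 = m
        have hyx0 : yp = x0 := by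
          have h1 : (s ^ m) ([x0] : Vertex d) = [x0] := pow_orbitCard_fix hs [x0]
          have h2 : ([yp] : Vertex d) = [x0] := by rw [← hsucc, heqm, h1]
          simpa using h2
        have hidxp : idx s yp = 0 := by
          refine (idx_unique hs yp ?_ ?_).symm
          · rw [hrepyp, ← hm]
            exact orbitCard_pos hs _
          · rw [hrepyp, pow_zero, Equiv.Perm.one_apply, hyx0]
        have hsy : state s ([y] : Vertex d) = b * Q⁻¹ := by
          have h1 : b = state s ([y] : Vertex d) * Q := by
            rw [hb, ← heqm, hQsucc]
          rw [h1]
          group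
        rw [hcons, Cfun_cons hs yp, hidxp, hrepyp, Cfun_cons hs y, ← hx0, ← hi, ← hm, ← hb,
          ← hQ]
        simp only [pow_zero, inv_one, Equiv.Perm.one_apply, state_one]
        have harg : state s ([y] : Vertex d) w = b (Q⁻¹ w) := by
          rw [hsy, Equiv.Perm.mul_apply]
        rw [harg]
        have hlen' : (Q⁻¹ w).length = n := by
          rw [len_eq (inv_mem hQm)]
          omega
        rw [ih b hbm (Q⁻¹ w) hlen']
        have hfix : (s ^ m) ([x0] : Vertex d) = [x0] := pow_orbitCard_fix hs [x0]
        have hrhs : s⁻¹ ((s ^ i)⁻¹ (([x0] : Vertex d) ++ Cfun b (Q⁻¹ w))) =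
            (s ^ m)⁻¹ (([x0] : Vertex d) ++ Cfun b (Q⁻¹ w)) := by
          rw [← Equiv.Perm.mul_apply, ← mul_inv_rev, ← pow_succ, heqm]
        rw [hrhs]
        have hsplit : (s ^ m)⁻¹ (([x0] : Vertex d) ++ Cfun b (Q⁻¹ w)) =
            (s ^ m)⁻¹ ([x0] : Vertex d) ++ state ((s ^ m)⁻¹) [x0] (Cfun b (Q⁻¹ w)) :=
          state_append (inv_mem (pow_mem hs m)) _ _
        have hinvfix : (s ^ m)⁻¹ ([x0] : Vertex d) = [x0] := by
          rw [← hfix, Equiv.Perm.inv_apply_self, hfix]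
        have hstinv : state ((s ^ m)⁻¹) ([x0] : Vertex d) = b⁻¹ := by
          rw [state_inv (pow_mem hs m), hinvfix, hb]
        rw [hsplit, hinvfix, hstinv]

end TreeDev

namespace TreeDev

variable {d : ℕ} {g s : Equiv.Perm (Vertex d)}

theorem pow_mul_cons (hs : s ∈ treeAut d) (x0 : Fin d) (t : ℕ) (z : Vertex d) :
    (s ^ (orbitCard s ([x0] : Vertex d) * t)) (([x0] : Vertex d) ++ z) =
      ([x0] : Vertex d) ++ ((state (s ^ orbitCard s ([x0] : Vertex d)) [x0]) ^ t) z := by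
  set m := orbitCard s ([x0] : Vertex d) with hm
  have hfix : (s ^ m) ([x0] : Vertex d) = [x0] := pow_orbitCard_fix hs [x0]
  rw [pow_mul, state_append (pow_mem (pow_mem hs m) t) [x0] z,
    Function.IsFixedPt.perm_pow hfix t,
    state_pow_of_fixed (pow_mem hs m) hfix t]

theorem pow_mul_cons_inv (hs : s ∈ treeAut d) (x0 : Fin d) (t : ℕ) (z : Vertex d) :
    ((s ^ (orbitCard s ([x0] : Vertex d) * t))⁻¹) (([x0] : Vertex d) ++ z) =
      ([x0] : Vertex d) ++ (((state (s ^ orbitCard s ([x0] : Vertex d)) [x0]) ^ t)⁻¹) z := by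
  apply (s ^ (orbitCard s ([x0] : Vertex d) * t)).injective
  rw [Equiv.Perm.apply_inv_self, pow_mul_cons hs, Equiv.Perm.apply_inv_self]

theorem pow_mul_fix (hs : s ∈ treeAut d) (x0 : Fin d) (t : ℕ) :
    (s ^ (orbitCard s ([x0] : Vertex d) * t)) ([x0] : Vertex d) = [x0] := by
  have := pow_mul_cons hs x0 t []
  have hbm : (state (s ^ orbitCard s ([x0] : Vertex d)) [x0] : Equiv.Perm (Vertex d)) ∈
      treeAut d := state_mem (pow_mem hs _) _
  rw [List.append_nil, nil_fixed (pow_mem hbm t), List.append_nil] at this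
  exact this

theorem state_pow_mul (hs : s ∈ treeAut d) (x0 : Fin d) (t : ℕ) :
    state (s ^ (orbitCard s ([x0] : Vertex d) * t)) [x0] =
      (state (s ^ orbitCard s ([x0] : Vertex d)) [x0]) ^ t := by
  rw [pow_mul]
  exact state_pow_of_fixed (pow_mem hs _) (pow_orbitCard_fix hs [x0]) t

theorem pow_mul_fix_inv (hs : s ∈ treeAut d) (x0 : Fin d) (t : ℕ) :
    ((s ^ (orbitCard s ([x0] : Vertex d) * t))⁻¹) ([x0] : Vertex d) = [x0] := by
  have h := pow_mul_fix hs x0 t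
  have h2 : ((s ^ (orbitCard s ([x0] : Vertex d) * t))⁻¹)
      ((s ^ (orbitCard s ([x0] : Vertex d) * t)) ([x0] : Vertex d)) = [x0] :=
    Equiv.Perm.inv_apply_self _ _
  rwa [h] at h2

theorem state_pow_mul_inv (hs : s ∈ treeAut d) (x0 : Fin d) (t : ℕ) :
    state ((s ^ (orbitCard s ([x0] : Vertex d) * t))⁻¹) [x0] =
      ((state (s ^ orbitCard s ([x0] : Vertex d)) [x0]) ^ t)⁻¹ := by
  rw [state_inv (pow_mem hs _), pow_mul_fix_inv hs x0 t, state_pow_mul hs x0 t]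

theorem state_eq_of (hg : g ∈ treeAut d) (v : Vertex d) (F : Equiv.Perm (Vertex d))
    (h : ∀ z : Vertex d, g (v ++ z) = g v ++ F z) : state g v = F := by
  refine Equiv.ext fun z => ?_
  rw [state_apply hg, h z, ← len_eq hg v, List.drop_left]

theorem Cperm_state_letter (hs : s ∈ treeAut d) (y : Fin d) :
    state (Cperm s) [y] =
      state ((s ^ idx s y)⁻¹) [rep s y] *
        Cperm (state (s ^ orbitCard s ([rep s y] : Vertex d)) [rep s y]) *
        (state (s ^ idx s y) [rep s y])⁻¹ := by
  set x0 := rep s y with hx0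
  set i := idx s y with hi
  set m := orbitCard s ([x0] : Vertex d) with hm
  set b := state (s ^ m) [x0] with hb
  set Q := state (s ^ i) ([x0] : Vertex d) with hQ
  have hbm : b ∈ treeAut d := state_mem (pow_mem hs m) _
  have hQm : Q ∈ treeAut d := state_mem (pow_mem hs i) _
  have hPm : (state ((s ^ i)⁻¹) ([x0] : Vertex d) : Equiv.Perm (Vertex d)) ∈ treeAut d :=
    state_mem (inv_mem (pow_mem hs i)) _
  refine state_eq_of (Cperm_mem hs) [y] _ fun z => ?_
  have h1 : Cperm s (([y] : Vertex d) ++ z) = Cfun s (y :: z) := by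
    rw [Cperm_apply hs]
    rfl
  have h2 : Cperm s ([y] : Vertex d) = ((s ^ i)⁻¹) ([x0] : Vertex d) := by
    rw [Cperm_apply hs]
    show Cfun s (y :: []) = _
    rw [Cfun_cons hs, ← hx0, ← hi, ← hm, ← hb, ← hQ]
    rw [nil_fixed (inv_mem hQm), Cfun_nil, List.append_nil]
  rw [h1, h2, Cfun_cons hs, ← hx0, ← hi, ← hm, ← hb, ← hQ]
  rw [state_append (inv_mem (pow_mem hs i)) [x0]]
  congr 1
  simp only [Equiv.Perm.mul_apply]
  rw [Cperm_apply hbm]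

end TreeDev

namespace TreeDev

variable {d : ℕ} {g s : Equiv.Perm (Vertex d)}

set_option maxHeartbeats 1000000 in
theorem Cfun_main : ∀ (n : ℕ) (s : Equiv.Perm (Vertex d)), s ∈ treeAut d →
    ∀ u : Vertex d, u.length = n →
    ∃ I : ℕ, I < orbitCard s u ∧
      Cfun s u = ((s ^ I)⁻¹) (((s ^ I)⁻¹) u) ∧
      state (Cperm s) u =
        state ((s ^ I)⁻¹) (((s ^ I)⁻¹) u) *
          Cperm (state (s ^ orbitCard s u) (((s ^ I)⁻¹) u)) *
          (state (s ^ I) (((s ^ I)⁻¹) u))⁻¹ := by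
  intro n
  induction n with
  | zero =>
    intro s hs u hu
    have hnil : u = [] := List.eq_nil_of_length_eq_zero hu
    subst hnil
    refine ⟨0, ?_, ?_, ?_⟩
    · rw [orbitCard_nil hs]
      omega
    · simp [Cfun_nil]
    · rw [orbitCard_nil hs]
      simp only [pow_zero, inv_one, Equiv.Perm.one_apply, pow_one]
      rw [state_one, state_nil hs, state_nil (Cperm_mem hs)]
      simp
  | succ n ih =>
    intro s hs u hu
    match u with
    | y :: w =>
      simp only [List.length_cons] at hu
      have hbmem : (state (s ^ orbitCard s ([rep s y] : Vertex d)) [rep s y] : Equiv.Perm (Vertex d)) ∈ treeAut d := state_mem (pow_mem hs _) _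
      have hqmem : (state (s ^ idx s y) ([rep s y] : Vertex d) : Equiv.Perm (Vertex d)) ∈ treeAut d := state_mem (pow_mem hs _) _
      have hpmem : (state ((s ^ idx s y)⁻¹) ([rep s y] : Vertex d) :
          Equiv.Perm (Vertex d)) ∈ treeAut d := state_mem (inv_mem (pow_mem hs _)) _
      have hw'len : (((state (s ^ idx s y) ([rep s y] : Vertex d))⁻¹ w)).length = n := by
        rw [len_eq (inv_mem hqmem)]
        omega
      obtain ⟨j, hj, hC, hS⟩ := ih _ hbmem _ hw'len
      have hiy : (s ^ idx s y) ([rep s y] : Vertex d) = [y] := idx_spec hs y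
      have hu_eq : (s ^ idx s y) (([rep s y] : Vertex d) ++ ((state (s ^ idx s y) ([rep s y] : Vertex d))⁻¹ w)) = y :: w := by
        rw [state_append (pow_mem hs _) _ _, hiy, Equiv.Perm.apply_inv_self]
        rfl
      have horb : orbitCard s (y :: w) = orbitCard s ([rep s y] : Vertex d) * orbitCard (state (s ^ orbitCard s ([rep s y] : Vertex d)) [rep s y]) ((state (s ^ idx s y) ([rep s y] : Vertex d))⁻¹ w) := by
        rw [← hu_eq, orbitCard_pow_apply hs]
        exact orbitCard_cons hs _ _
      have hinv_split2 : ((s ^ (idx s y + orbitCard s ([rep s y] : Vertex d) * j))⁻¹ : Equiv.Perm (Vertex d)) =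
          (s ^ (orbitCard s ([rep s y] : Vertex d) * j))⁻¹ * (s ^ idx s y)⁻¹ := by
        rw [pow_add, mul_inv_rev]
      have hinv_split : ((s ^ (idx s y + orbitCard s ([rep s y] : Vertex d) * j))⁻¹ : Equiv.Perm (Vertex d)) =
          (s ^ idx s y)⁻¹ * (s ^ (orbitCard s ([rep s y] : Vertex d) * j))⁻¹ := by
        rw [add_comm, pow_add, mul_inv_rev]
      have hu0 : ((s ^ (idx s y + orbitCard s ([rep s y] : Vertex d) * j))⁻¹) (y :: w) = ([rep s y] : Vertex d) ++ (((state (s ^ orbitCard s ([rep s y] : Vertex d)) [rep s y]) ^ j)⁻¹ ((state (s ^ idx s y) ([rep s y] : Vertex d))⁻¹ w)) := by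
        rw [← hu_eq, hinv_split2, Equiv.Perm.mul_apply, Equiv.Perm.inv_apply_self,
          pow_mul_cons_inv hs (rep s y) j]
      refine ⟨(idx s y + orbitCard s ([rep s y] : Vertex d) * j), ?_, ?_, ?_⟩
      · rw [horb]
        have h1 := idx_lt hs y
        have h2 : orbitCard s ([rep s y] : Vertex d) * (j + 1) ≤ orbitCard s ([rep s y] : Vertex d) * orbitCard (state (s ^ orbitCard s ([rep s y] : Vertex d)) [rep s y]) ((state (s ^ idx s y) ([rep s y] : Vertex d))⁻¹ w) := Nat.mul_le_mul_left _ hj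
        have h3 : orbitCard s ([rep s y] : Vertex d) * (j + 1) = orbitCard s ([rep s y] : Vertex d) * j + orbitCard s ([rep s y] : Vertex d) := by ring
        omega
      · rw [hu0, Cfun_cons hs y, hC, hinv_split, Equiv.Perm.mul_apply,
          pow_mul_cons_inv hs (rep s y) j]
      · rw [hu0, horb]
        have e1 : state (Cperm s) (y :: w) = state (state (Cperm s) [y]) w :=
          state_state (Cperm_mem hs) [y] w
        rw [e1, Cperm_state_letter hs y,
          state_mul (mul_mem hpmem (Cperm_mem hbmem)) (inv_mem hqmem) w,
          state_mul hpmem (Cperm_mem hbmem), Cperm_apply hbmem, hC, hS,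
          state_inv hqmem w]
        have ha1 : state (state ((s ^ idx s y)⁻¹) [rep s y]) (((state (s ^ orbitCard s ([rep s y] : Vertex d)) [rep s y]) ^ j)⁻¹ (((state (s ^ orbitCard s ([rep s y] : Vertex d)) [rep s y]) ^ j)⁻¹ ((state (s ^ idx s y) ([rep s y] : Vertex d))⁻¹ w))) =
            state ((s ^ idx s y)⁻¹) (((s ^ (orbitCard s ([rep s y] : Vertex d) * j))⁻¹) (([rep s y] : Vertex d) ++ (((state (s ^ orbitCard s ([rep s y] : Vertex d)) [rep s y]) ^ j)⁻¹ ((state (s ^ idx s y) ([rep s y] : Vertex d))⁻¹ w)))) := by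
          rw [pow_mul_cons_inv hs (rep s y) j,
            state_state (inv_mem (pow_mem hs (idx s y))) [rep s y]]
        have ha2 : state (((state (s ^ orbitCard s ([rep s y] : Vertex d)) [rep s y]) ^ j)⁻¹) (((state (s ^ orbitCard s ([rep s y] : Vertex d)) [rep s y]) ^ j)⁻¹ ((state (s ^ idx s y) ([rep s y] : Vertex d))⁻¹ w)) = state ((s ^ (orbitCard s ([rep s y] : Vertex d) * j))⁻¹) (([rep s y] : Vertex d) ++ (((state (s ^ orbitCard s ([rep s y] : Vertex d)) [rep s y]) ^ j)⁻¹ ((state (s ^ idx s y) ([rep s y] : Vertex d))⁻¹ w))) := by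
          rw [state_state (inv_mem (pow_mem hs (orbitCard s ([rep s y] : Vertex d) * j))) [rep s y],
            state_pow_mul_inv hs (rep s y) j]
        have ha3 : state ((state (s ^ orbitCard s ([rep s y] : Vertex d)) [rep s y]) ^ (orbitCard (state (s ^ orbitCard s ([rep s y] : Vertex d)) [rep s y]) ((state (s ^ idx s y) ([rep s y] : Vertex d))⁻¹ w))) (((state (s ^ orbitCard s ([rep s y] : Vertex d)) [rep s y]) ^ j)⁻¹ ((state (s ^ idx s y) ([rep s y] : Vertex d))⁻¹ w)) = state (s ^ (orbitCard s ([rep s y] : Vertex d) * orbitCard (state (s ^ orbitCard s ([rep s y] : Vertex d)) [rep s y]) ((state (s ^ idx s y) ([rep s y] : Vertex d))⁻¹ w))) (([rep s y] : Vertex d) ++ (((state (s ^ orbitCard s ([rep s y] : Vertex d)) [rep s y]) ^ j)⁻¹ ((state (s ^ idx s y) ([rep s y] : Vertex d))⁻¹ w))) := by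
          rw [state_state (pow_mem hs (orbitCard s ([rep s y] : Vertex d) * orbitCard (state (s ^ orbitCard s ([rep s y] : Vertex d)) [rep s y]) ((state (s ^ idx s y) ([rep s y] : Vertex d))⁻¹ w))) [rep s y],
            state_pow_mul hs (rep s y) (orbitCard (state (s ^ orbitCard s ([rep s y] : Vertex d)) [rep s y]) ((state (s ^ idx s y) ([rep s y] : Vertex d))⁻¹ w))]
        have ha4 : state ((state (s ^ orbitCard s ([rep s y] : Vertex d)) [rep s y]) ^ j) (((state (s ^ orbitCard s ([rep s y] : Vertex d)) [rep s y]) ^ j)⁻¹ ((state (s ^ idx s y) ([rep s y] : Vertex d))⁻¹ w)) = state (s ^ (orbitCard s ([rep s y] : Vertex d) * j)) (([rep s y] : Vertex d) ++ (((state (s ^ orbitCard s ([rep s y] : Vertex d)) [rep s y]) ^ j)⁻¹ ((state (s ^ idx s y) ([rep s y] : Vertex d))⁻¹ w))) := by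
          rw [state_state (pow_mem hs (orbitCard s ([rep s y] : Vertex d) * j)) [rep s y],
            state_pow_mul hs (rep s y) j]
        have hBW : ((state (s ^ orbitCard s ([rep s y] : Vertex d)) [rep s y]) ^ j) (((state (s ^ orbitCard s ([rep s y] : Vertex d)) [rep s y]) ^ j)⁻¹ ((state (s ^ idx s y) ([rep s y] : Vertex d))⁻¹ w)) = ((state (s ^ idx s y) ([rep s y] : Vertex d))⁻¹ w) := Equiv.Perm.apply_inv_self _ _
        have ha5 : state (state (s ^ idx s y) ([rep s y] : Vertex d)) ((state (s ^ idx s y) ([rep s y] : Vertex d))⁻¹ w) = state (s ^ idx s y) ((s ^ (orbitCard s ([rep s y] : Vertex d) * j)) (([rep s y] : Vertex d) ++ (((state (s ^ orbitCard s ([rep s y] : Vertex d)) [rep s y]) ^ j)⁻¹ ((state (s ^ idx s y) ([rep s y] : Vertex d))⁻¹ w)))) := by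
          rw [pow_mul_cons hs (rep s y) j, hBW,
            state_state (pow_mem hs (idx s y)) [rep s y]]
        rw [ha1, ha2, ha3, ha4, ha5]
        have hc1 : state ((s ^ (idx s y + orbitCard s ([rep s y] : Vertex d) * j))⁻¹) (([rep s y] : Vertex d) ++ (((state (s ^ orbitCard s ([rep s y] : Vertex d)) [rep s y]) ^ j)⁻¹ ((state (s ^ idx s y) ([rep s y] : Vertex d))⁻¹ w))) =
            state ((s ^ idx s y)⁻¹) (((s ^ (orbitCard s ([rep s y] : Vertex d) * j))⁻¹) (([rep s y] : Vertex d) ++ (((state (s ^ orbitCard s ([rep s y] : Vertex d)) [rep s y]) ^ j)⁻¹ ((state (s ^ idx s y) ([rep s y] : Vertex d))⁻¹ w)))) *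
              state ((s ^ (orbitCard s ([rep s y] : Vertex d) * j))⁻¹) (([rep s y] : Vertex d) ++ (((state (s ^ orbitCard s ([rep s y] : Vertex d)) [rep s y]) ^ j)⁻¹ ((state (s ^ idx s y) ([rep s y] : Vertex d))⁻¹ w))) := by
          rw [hinv_split, state_mul (inv_mem (pow_mem hs (idx s y)))
            (inv_mem (pow_mem hs (orbitCard s ([rep s y] : Vertex d) * j)))]
        have hc2 : state (s ^ (idx s y + orbitCard s ([rep s y] : Vertex d) * j)) (([rep s y] : Vertex d) ++ (((state (s ^ orbitCard s ([rep s y] : Vertex d)) [rep s y]) ^ j)⁻¹ ((state (s ^ idx s y) ([rep s y] : Vertex d))⁻¹ w))) =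
            state (s ^ idx s y) ((s ^ (orbitCard s ([rep s y] : Vertex d) * j)) (([rep s y] : Vertex d) ++ (((state (s ^ orbitCard s ([rep s y] : Vertex d)) [rep s y]) ^ j)⁻¹ ((state (s ^ idx s y) ([rep s y] : Vertex d))⁻¹ w)))) * state (s ^ (orbitCard s ([rep s y] : Vertex d) * j)) (([rep s y] : Vertex d) ++ (((state (s ^ orbitCard s ([rep s y] : Vertex d)) [rep s y]) ^ j)⁻¹ ((state (s ^ idx s y) ([rep s y] : Vertex d))⁻¹ w))) := by
          rw [pow_add, state_mul (pow_mem hs (idx s y)) (pow_mem hs (orbitCard s ([rep s y] : Vertex d) * j))]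
        rw [hc1, hc2, mul_inv_rev]
        group

end TreeDev

namespace TreeDev

variable {d : ℕ} {a g q s : Equiv.Perm (Vertex d)}

theorem apply_take (hq : q ∈ treeAut d) (w : Vertex d) (k : ℕ) :
    q (w.take k) = (q w).take k := by
  by_cases hk : k ≤ w.length
  · have h1 : q w = q (w.take k) ++ state q (w.take k) (w.drop k) := by
      conv_lhs => rw [← List.take_append_drop k w]
      exact state_append hq _ _
    have hlen : (q (w.take k)).length = k := by
      rw [len_eq hq, List.length_take]
      omega
    have h2 := List.take_left (l₁ := q (w.take k)) (l₂ := state q (w.take k) (w.drop k))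
    rw [hlen] at h2
    rw [h1, h2]
  · push_neg at hk
    rw [List.take_of_length_le (by omega), List.take_of_length_le (by rw [len_eq hq]; omega)]

theorem exists_active_of_ne_one (hq : q ∈ treeAut d) (hne : q ≠ 1) :
    ∃ u : Vertex d, ∃ x : Fin d, state q u [x] ≠ [x] := by
  classical
  have hex0 : ∃ w : Vertex d, q w ≠ w := by
    by_contra hcon
    push_neg at hcon
    exact hne (Equiv.ext hcon)
  obtain ⟨w, hw⟩ := hex0
  have hex : ∃ t, (q w).take t ≠ w.take t := by
    refine ⟨w.length, ?_⟩
    rw [show (q w).take w.length = q w by rw [← len_eq hq w, List.take_length],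
      List.take_length]
    exact hw
  set t₀ := Nat.find hex with ht₀def
  have ht₀ : (q w).take t₀ ≠ w.take t₀ := Nat.find_spec hex
  have hmin : ∀ r, r < t₀ → (q w).take r = w.take r := by
    intro r hr
    by_contra hcon
    have : t₀ ≤ r := ht₀def ▸ Nat.find_le hcon
    omega
  have ht₀pos : 0 < t₀ := by
    rcases Nat.eq_zero_or_pos t₀ with h | h
    · exfalso
      apply ht₀
      rw [h]
      simp
    · exact h
  have ht₀le : t₀ ≤ w.length := by
    by_contra hcon
    push_neg at hcon
    apply ht₀
    have h1 : w.length < t₀ := hcon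
    rw [List.take_of_length_le (by rw [len_eq hq w]; omega), List.take_of_length_le (by omega)]
    exact absurd (hmin w.length h1) (by
      intro hc
      apply hw
      rw [show (q w).take w.length = q w by rw [← len_eq hq w, List.take_length],
        List.take_length] at hc
      exact hc)
  have hidx : t₀ - 1 < w.length := by omega
  refine ⟨w.take (t₀ - 1), w[t₀ - 1], ?_⟩
  intro hcontra
  apply ht₀
  have hqu : q (w.take (t₀ - 1)) = w.take (t₀ - 1) := by
    rw [apply_take hq w (t₀ - 1), hmin (t₀ - 1) (by omega)]
  have htk : w.take (t₀ - 1) ++ [w[t₀ - 1]] = w.take t₀ := by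
    have := List.take_succ (l := w) (i := t₀ - 1)
    rw [List.getElem?_eq_getElem hidx] at this
    rw [show t₀ - 1 + 1 = t₀ by omega] at this
    rw [this]
    rfl
  have h2 : q (w.take t₀) = (q w).take t₀ := apply_take hq w t₀
  rw [← htk, state_append hq (w.take (t₀ - 1)) [w[t₀ - 1]], hqu, hcontra] at h2
  rw [← h2, htk]

open scoped Classical in
theorem list_prod_filter_ne_one (l : List (Equiv.Perm (Vertex d))) :
    (l.filter (fun q => q ≠ 1)).prod = l.prod := by
  simp only [ne_eq, decide_not]
  induction l with
  | nil => rfl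
  | cons x l ih =>
    rw [List.filter_cons]
    by_cases hx : x = 1
    · subst hx
      simp [ih]
    · simp [hx, ih]

theorem state_pow_prod (ha : a ∈ treeAut d) (v : Vertex d) (j : ℕ) :
    state (a ^ j) v = (((List.range j).reverse).map (fun t => state a ((a ^ t) v))).prod := by
  induction j with
  | zero => simp [state_one]
  | succ j ih =>
    rw [List.range_succ, List.reverse_append]
    simp only [List.reverse_singleton, List.singleton_append, List.map_cons, List.prod_cons]
    rw [← ih, pow_succ', state_mul ha (pow_mem ha j) v]

end TreeDev

namespace TreeDev

variable {d : ℕ} {a : Equiv.Perm (Vertex d)}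

theorem length_filter_map' {α : Type*} (f : ℕ → α) (p : α → Bool) (l : List ℕ) :
    ((l.map f).filter p).length = (l.filter (fun t => p (f t))).length := by
  induction l with
  | nil => rfl
  | cons x l ih =>
    rw [List.map_cons, List.filter_cons, List.filter_cons]
    cases hpx : p (f x) <;> simp [hpx, ih]

open scoped Classical in
theorem list_range_filter_card (jj : ℕ) (p : ℕ → Bool) :
    ((List.range jj).filter p).length =
      ((Finset.range jj).filter (fun t => p t = true)).card := by
  induction jj with
  | zero => rfl
  | succ jj ih =>
    rw [List.range_succ, List.filter_append, List.length_append, ih, Finset.range_add_one,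
      Finset.filter_insert]
    by_cases h : p jj = true
    · rw [if_pos h, Finset.card_insert_of_notMem (by simp)]
      simp [h]
    · rw [if_neg h]
      simp [h]

open scoped Classical in
theorem T_finite (ha : a ∈ treeAut d) (hfs : FiniteState a)
    (C : ℕ) (hθ : ∀ k : ℕ, theta a k ≤ C) :
    {g : Equiv.Perm (Vertex d) |
      ∃ v : Vertex d, ∃ jj : ℕ, jj ≤ orbitCard a v ∧ g = state (a ^ jj) v}.Finite := by
  classical
  have hQ : (Set.range fun v : Vertex d => state a v).Finite := hfs
  set uwit : Equiv.Perm (Vertex d) → Vertex d := fun q =>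
    if h : ∃ u : Vertex d, ∃ x : Fin d, state q u [x] ≠ [x] then Classical.choose h
    else [] with huwit
  set L : ℕ := hQ.toFinset.sup fun q => (uwit q).length with hL
  have key1 : ∀ v : Vertex d, state a v ≠ 1 →
      (uwit (state a v)).length ≤ L ∧
        ∃ x : Fin d, state (state a v) (uwit (state a v)) [x] ≠ [x] := by
    intro v hv
    have hex := exists_active_of_ne_one (state_mem ha v) hv
    constructor
    · refine Finset.le_sup (f := fun q => (uwit q).length) ?_
      rw [Set.Finite.mem_toFinset]
      exact ⟨v, rfl⟩
    · rw [huwit]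
      simp only
      rw [dif_pos hex]
      exact Classical.choose_spec hex
  have hΘfin : ∀ n : ℕ,
      {z : Vertex d | z.length = n ∧ ∃ x : Fin d, state a z [x] ≠ [x]}.Finite :=
    fun n => (List.finite_length_eq (Fin d) n).subset fun z hz => hz.1
  have hΘcard : ∀ n : ℕ, (hΘfin n).toFinset.card ≤ C := by
    intro n
    have h1 : {z : Vertex d | z.length = n ∧ ∃ x : Fin d, state a z [x] ≠ [x]}.ncard =
        theta a n := by
      rw [← Nat.card_coe_set_eq]
      exact Nat.card_congr (Equiv.subtypeEquivRight fun z => Iff.rfl)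
    rw [← Set.ncard_eq_toFinset_card _ (hΘfin n), h1]
    exact hθ n
  -- count of nontrivial factors along an orbit segment
  have hcount : ∀ (v : Vertex d) (jj : ℕ), jj ≤ orbitCard a v →
      ((Finset.range jj).filter (fun t => state a ((a ^ t) v) ≠ 1)).card ≤ (L + 1) * C := by
    intro v jj hjj
    have hA := Finset.card_biUnion_le_card_mul (Finset.range (L + 1))
      (fun l => (hΘfin (v.length + l)).toFinset) C (fun l _ => hΘcard _)
    rw [Finset.card_range] at hA
    refine le_trans (Finset.card_le_card_of_injOn
      (fun t => ((a ^ t) v) ++ uwit (state a ((a ^ t) v))) ?_ ?_) hA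
    · intro t ht
      rw [Finset.mem_coe, Finset.mem_filter, Finset.mem_range] at ht
      obtain ⟨htj, htne⟩ := ht
      obtain ⟨hlen, x, hx⟩ := key1 ((a ^ t) v) htne
      rw [Finset.mem_coe, Finset.mem_biUnion]
      refine ⟨(uwit (state a ((a ^ t) v))).length, ?_, ?_⟩
      · rw [Finset.mem_range]
        omega
      · rw [Set.Finite.mem_toFinset]
        constructor
        · rw [List.length_append, len_eq (pow_mem ha t) v]
        · refine ⟨x, ?_⟩
          rw [state_state ha ((a ^ t) v) (uwit (state a ((a ^ t) v)))]
          exact hx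
    · intro t₁ ht₁ t₂ ht₂ heq
      simp only [Finset.coe_filter, Set.mem_setOf_eq, Finset.mem_range] at ht₁ ht₂
      have heq' : (a ^ t₁) v ++ uwit (state a ((a ^ t₁) v)) =
          (a ^ t₂) v ++ uwit (state a ((a ^ t₂) v)) := heq
      have hv1 : (a ^ t₁) v = (a ^ t₂) v := by
        have h1 := List.take_left (l₁ := (a ^ t₁) v) (l₂ := uwit (state a ((a ^ t₁) v)))
        have h2 := List.take_left (l₁ := (a ^ t₂) v) (l₂ := uwit (state a ((a ^ t₂) v)))
        rw [len_eq (pow_mem ha t₁) v] at h1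
        rw [len_eq (pow_mem ha t₂) v] at h2
        rw [← h1, ← h2, heq']
      exact orbitCard_distinct ha v t₁ (by omega) t₂ (by omega) hv1
  -- every element of the set is a product of at most (L+1)*C states of a
  have hsub : {g : Equiv.Perm (Vertex d) |
      ∃ v : Vertex d, ∃ jj : ℕ, jj ≤ orbitCard a v ∧ g = state (a ^ jj) v} ⊆
      List.prod '' ((fun l : List ↥(Set.range fun v : Vertex d => state a v) =>
        l.map Subtype.val) '' {l | l.length ≤ (L + 1) * C}) := by
    rintro g ⟨v, jj, hjj, rfl⟩
    have hprod := state_pow_prod ha v jj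
    set l0 : List (Equiv.Perm (Vertex d)) :=
      ((List.range jj).reverse).map (fun t => state a ((a ^ t) v)) with hl0
    set lf := l0.filter (fun q => q ≠ 1) with hlf
    have hprod2 : state (a ^ jj) v = lf.prod := by
      rw [hprod, hlf, list_prod_filter_ne_one]
    have hlen : lf.length ≤ (L + 1) * C := by
      rw [hlf, hl0,
        length_filter_map' (fun t => state a ((a ^ t) v)) _ ((List.range jj).reverse),
        List.filter_reverse, List.length_reverse,
        list_range_filter_card jj _]
      have hfeq : (Finset.filter (fun t => decide (state a ((a ^ t) v) ≠ 1) = true)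
          (Finset.range jj)) =
          Finset.filter (fun t => state a ((a ^ t) v) ≠ 1) (Finset.range jj) := by
        apply Finset.filter_congr
        intro t _
        simp
      rw [hfeq]
      exact hcount v jj hjj
    have hmem : ∀ x ∈ lf, x ∈ Set.range (fun v : Vertex d => state a v) := by
      intro x hxl
      rw [hlf, List.mem_filter] at hxl
      obtain ⟨hx0, _⟩ := hxl
      rw [hl0, List.mem_map] at hx0
      obtain ⟨t, _, rfl⟩ := hx0
      exact ⟨(a ^ t) v, rfl⟩
    rw [Set.mem_image]
    refine ⟨lf, ?_, hprod2.symm⟩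
    rw [Set.mem_image]
    refine ⟨lf.attach.map (fun x => ⟨x.1, hmem x.1 x.2⟩), ?_, ?_⟩
    · simp only [Set.mem_setOf_eq, List.length_map, List.length_attach]
      exact hlen
    · rw [List.map_map]
      simp
  haveI := hQ.to_subtype
  have hfin1 : ({l : List ↥(Set.range fun v : Vertex d => state a v) |
      l.length ≤ (L + 1) * C}).Finite := List.finite_length_le _ _
  exact ((hfin1.image _).image _).subset hsub

end TreeDev

theorem bounded_conj_inv_in_FSG'
    (d : ℕ) (a : Equiv.Perm (Vertex d))
    (ha : IsTreeAut a) (hba : BoundedAut a) :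
    ∃ h : Equiv.Perm (Vertex d), IsTreeAut h ∧ FiniteState h ∧ h * a * h⁻¹ = a⁻¹ := by
  classical
  obtain ⟨hfs, C, hθ⟩ := hba
  have ha' : a ∈ treeAut d := TreeDev.mem_treeAut'.2 ha
  refine ⟨TreeDev.Cperm a, TreeDev.mem_treeAut'.1 (TreeDev.Cperm_mem ha'), ?_, ?_⟩
  · -- FiniteState
    have hT := TreeDev.T_finite ha' hfs C hθ
    have himg : (Set.range fun v : Vertex d => state (TreeDev.Cperm a) v) ⊆
        (fun p : Equiv.Perm (Vertex d) × Equiv.Perm (Vertex d) × Equiv.Perm (Vertex d) =>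
          p.1⁻¹ * TreeDev.Cperm p.2.1 * p.2.2⁻¹) ''
          (({g : Equiv.Perm (Vertex d) |
              ∃ v : Vertex d, ∃ jj : ℕ, jj ≤ orbitCard a v ∧ g = state (a ^ jj) v}) ×ˢ
            ({g : Equiv.Perm (Vertex d) |
              ∃ v : Vertex d, ∃ jj : ℕ, jj ≤ orbitCard a v ∧ g = state (a ^ jj) v} ×ˢ
             {g : Equiv.Perm (Vertex d) |
              ∃ v : Vertex d, ∃ jj : ℕ, jj ≤ orbitCard a v ∧ g = state (a ^ jj) v})) := by
      rintro _ ⟨u, rfl⟩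
      obtain ⟨I, hIlt, hCf, hSt⟩ := TreeDev.Cfun_main u.length a ha' u rfl
      refine ⟨⟨state (a ^ I) (((a ^ I)⁻¹) (((a ^ I)⁻¹) u)),
        state (a ^ orbitCard a u) (((a ^ I)⁻¹) u),
        state (a ^ I) (((a ^ I)⁻¹) u)⟩, ⟨?_, ?_, ?_⟩, ?_⟩
      · refine ⟨((a ^ I)⁻¹) (((a ^ I)⁻¹) u), I, ?_, rfl⟩
        rw [TreeDev.orbitCard_inv_pow_apply ha', TreeDev.orbitCard_inv_pow_apply ha']
        omega
      · refine ⟨((a ^ I)⁻¹) u, orbitCard a u, ?_, rfl⟩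
        rw [TreeDev.orbitCard_inv_pow_apply ha']
      · refine ⟨((a ^ I)⁻¹) u, I, ?_, rfl⟩
        rw [TreeDev.orbitCard_inv_pow_apply ha']
        omega
      · simp only
        rw [hSt, TreeDev.state_inv (pow_mem ha' I)]
    exact ((hT.prod (hT.prod hT)).image _).subset himg
  · -- conjugation
    have hconj : TreeDev.Cperm a * a = a⁻¹ * TreeDev.Cperm a := by
      refine Equiv.ext fun v => ?_
      simp only [Equiv.Perm.mul_apply]
      rw [TreeDev.Cperm_apply ha', TreeDev.Cperm_apply ha']
      exact TreeDev.Cfun_conj v.length a ha' v rfl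
    calc TreeDev.Cperm a * a * (TreeDev.Cperm a)⁻¹
        = a⁻¹ * TreeDev.Cperm a * (TreeDev.Cperm a)⁻¹ := by rw [hconj]
      _ = a⁻¹ := by group

/-- Every bounded automorphism `a` of the regular rooted
`d`-ary tree is conjugate to `a⁻¹` in the group `F(X)` of finite-state
automorphisms. -/
theorem bounded_conj_inv_in_FSG
    (d : ℕ) (hd : 2 ≤ d) (a : Equiv.Perm (Vertex d))
    (ha : IsTreeAut a) (hba : BoundedAut a) :
    ∃ h : Equiv.Perm (Vertex d), IsTreeAut h ∧ FiniteState h ∧ h * a * h⁻¹ = a⁻¹ := by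
  exact bounded_conj_inv_in_FSG' d a ha hba
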